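/- In the uniform case, if λ* > 0, then λ* belongs to the finite candidate set Λ = {x_j − (2r(j−i) + r) : 1 ≤ i ≤ j ≤ n} ∪ {L − 2r(j−i) − r − x_i : 1 ≤ i ≤ j ≤ n} ∪ {(x_j − x_i − 2r(j−i))/2 : 1 ≤ i < j ≤ n}. -/

import Mathlib

/-- Uniform case: placement `y` of sensors `1, …, n`, all with range `r`, covers `[0, L]`. -/
def Covers (n : ℕ) (L r : ℝ) (y : ℕ → ℝ) : Prop :=
  Set.Icc (0 : ℝ) L ⊆ ⋃ i ∈ Set.Icc 1 n, Set.Icc (y i - r) (y i + r)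

/-- The maximum movement `max_{1 ≤ i ≤ n} |x i - y i|` of the placement `y`. -/
noncomputable def MaxMove (n : ℕ) (x y : ℕ → ℝ) : ℝ :=
  sSup ((fun i => |x i - y i|) '' Set.Icc 1 n)

/-- `λ*`: the infimum of the maximum movement over all covering placements. -/
noncomputable def LamStar (n : ℕ) (L r : ℝ) (x : ℕ → ℝ) : ℝ :=
  sInf (MaxMove n x '' {y : ℕ → ℝ | Covers n L r y})

lemma le_maxMove (n : ℕ) (x y : ℕ → ℝ) (k : ℕ) (hk : k ∈ Set.Icc 1 n) :
    |x k - y k| ≤ MaxMove n x y :=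
  le_csSup (((Set.finite_Icc 1 n).image _).bddAbove) ⟨k, hk, rfl⟩

lemma maxMove_nonneg (n : ℕ) (hn : 1 ≤ n) (x y : ℕ → ℝ) : 0 ≤ MaxMove n x y :=
  (abs_nonneg _).trans (le_maxMove n x y 1 ⟨le_refl 1, hn⟩)

lemma maxMove_le (n : ℕ) (hn : 1 ≤ n) (x y : ℕ → ℝ) (c : ℝ)
    (h : ∀ k ∈ Set.Icc 1 n, |x k - y k| ≤ c) : MaxMove n x y ≤ c :=
  csSup_le ⟨_, ⟨1, ⟨le_refl 1, hn⟩, rfl⟩⟩ (by rintro _ ⟨k, hk, rfl⟩; exact h k hk)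

lemma countP_range_le (i n : ℕ) :
    (List.range n).countP (fun k => decide (i ≤ k)) = n - i := by
  induction n with
  | zero => simp
  | succ n ih =>
    rw [List.range_succ, List.countP_append, ih]
    by_cases h : i ≤ n <;> simp [List.countP_cons, List.countP_nil, h] <;> omega

lemma countP_range_lt (m n : ℕ) :
    (List.range n).countP (fun k => decide (k < m)) = min m n := by
  induction n with
  | zero => simp
  | succ n ih =>
    rw [List.range_succ, List.countP_append, ih]
    by_cases h : n < m <;> simp [List.countP_cons, List.countP_nil, h] <;> omega

lemma exists_sorted (n : ℕ) (hn : 1 ≤ n) (L r : ℝ) (x y : ℕ → ℝ)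
    (hsort : ∀ i j, 1 ≤ i → i ≤ j → j ≤ n → x i ≤ x j)
    (hcov : Covers n L r y) :
    ∃ y' : ℕ → ℝ, Covers n L r y' ∧ (∀ p q, 1 ≤ p → p ≤ q → q ≤ n → y' p ≤ y' q) ∧
      ∀ i ∈ Set.Icc 1 n, |x i - y' i| ≤ MaxMove n x y := by
  classical
  set lam := MaxMove n x y with hlam
  have hmove : ∀ k, 1 ≤ k → k ≤ n → |x k - y k| ≤ lam := fun k h1 h2 =>
    le_maxMove n x y k ⟨h1, h2⟩
  set l : List ℝ := (List.range n).map (fun k => y (k + 1)) with hl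
  set l' : List ℝ := l.mergeSort (fun a b => decide (a ≤ b)) with hl'
  have hperm : l'.Perm l := List.mergeSort_perm l _
  have hlen : l'.length = n := by
    rw [hperm.length_eq, hl, List.length_map, List.length_range]
  have hsorted : ∀ (p q : Fin l'.length), p < q → l'.get p ≤ l'.get q := by
    have := List.pairwise_mergeSort (le := fun a b : ℝ => decide (a ≤ b))
      (fun a b c hab hbc => by simp_all; linarith)
      (fun a b => by simp [le_total]) l
    rw [List.pairwise_iff_get] at this
    intro p q hpq
    simpa using this p q hpq
  refine ⟨fun i => l'.getD (i - 1) 0, ?_, ?_, ?_⟩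
  · -- coverage
    intro t ht
    obtain ⟨S, ⟨m, rfl⟩, hS⟩ := hcov ht
    simp only [Set.mem_iUnion, Set.mem_Icc] at hS
    obtain ⟨⟨hm1, hm2⟩, ht1, ht2⟩ := hS
    have hmem : y m ∈ l' := by
      rw [hperm.mem_iff, hl, List.mem_map]
      exact ⟨m - 1, List.mem_range.2 (by omega), by congr 1; omega⟩
    obtain ⟨k, hk, hkeq⟩ := List.getElem_of_mem hmem
    simp only [Set.mem_iUnion, Set.mem_Icc]
    refine ⟨k + 1, ⟨by omega, by omega⟩, ?_, ?_⟩ <;>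
      rw [show k + 1 - 1 = k from rfl, List.getD_eq_getElem l' 0 hk, hkeq] <;> assumption
  · -- monotone
    intro p q h1 hpq hq
    rcases eq_or_lt_of_le hpq with rfl | hlt
    · exact le_rfl
    · have hp' : p - 1 < l'.length := by omega
      have hq' : q - 1 < l'.length := by omega
      show l'.getD (p-1) 0 ≤ l'.getD (q-1) 0
      rw [List.getD_eq_getElem l' 0 hp', List.getD_eq_getElem l' 0 hq']
      exact hsorted ⟨p - 1, hp'⟩ ⟨q - 1, hq'⟩ (by simp; omega)
  · -- pigeonhole
    intro i hi
    obtain ⟨hi1, hi2⟩ := hi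
    have hi' : i - 1 < l'.length := by omega
    rw [abs_sub_le_iff]
    constructor
    · -- x i - y' i ≤ lam, i.e. x i - lam ≤ y' i
      by_contra hcon
      push_neg at hcon
      have hyi : l'.getD (i - 1) 0 < x i - lam := by linarith
      rw [List.getD_eq_getElem l' 0 hi'] at hyi
      set Q : ℝ → Bool := fun a => decide (a < x i - lam) with hQ
      have step1 : i ≤ l'.countP Q := by
        have htd : l' = l'.take i ++ l'.drop i := (List.take_append_drop i l').symm
        have h1 : (l'.take i).countP Q = (l'.take i).length := by
          rw [List.countP_eq_length]
          intro a ha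
          obtain ⟨j, hj, hja⟩ := List.getElem_of_mem ha
          have hj' : j < l'.length := by
            have : (l'.take i).length = min i l'.length := List.length_take; omega
          rw [List.getElem_take] at hja
          have : l'[j] ≤ l'[i-1] := by
            rcases eq_or_lt_of_le (show j ≤ i - 1 by have : (l'.take i).length = min i l'.length := List.length_take; omega) with h | h
            · subst h; exact le_rfl
            · exact hsorted ⟨j, hj'⟩ ⟨i - 1, hi'⟩ (by simpa using h)
          rw [← hja]; simp only [hQ, decide_eq_true_eq]; linarith
        have h2 : (l'.take i).length = i := by
          rw [List.length_take]; omega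
        calc i = (l'.take i).countP Q := by rw [h1, h2]
          _ ≤ l'.countP Q := by
              conv_rhs => rw [htd]
              rw [List.countP_append]; omega
      have step2 : l.countP Q ≤ i - 1 := by
        rw [hl, List.countP_map]
        have hmono : ∀ k ∈ List.range n, (Q ∘ fun k => y (k + 1)) k = true →
            (fun k => decide (k < i - 1)) k = true := by
          intro k hk hQk
          simp only [Function.comp, hQ, decide_eq_true_eq] at hQk
          simp only [decide_eq_true_eq]
          have hk' : k < n := List.mem_range.1 hk
          have hxk : x (k+1) ≤ y (k+1) + lam := by
            have := hmove (k+1) (by omega) (by omega)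
            rw [abs_sub_le_iff] at this; linarith [this.1]
          by_contra hki
          push_neg at hki
          have : x i ≤ x (k + 1) := hsort i (k+1) hi1 (by omega) (by omega)
          linarith
        calc (List.range n).countP (Q ∘ fun k => y (k + 1))
            ≤ (List.range n).countP (fun k => decide (k < i - 1)) :=
              List.countP_mono_left hmono
          _ = min (i-1) n := countP_range_lt _ _
          _ ≤ i - 1 := min_le_left _ _
      have := hperm.countP_eq Q
      omega
    · -- y' i - x i ≤ lam, i.e. y' i ≤ x i + lam
      by_contra hcon
      push_neg at hcon
      have hyi : x i + lam < l'.getD (i - 1) 0 := by linarith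
      rw [List.getD_eq_getElem l' 0 hi'] at hyi
      set P : ℝ → Bool := fun a => decide (x i + lam < a) with hP
      have step1 : n - (i - 1) ≤ l'.countP P := by
        have h1 : (l'.drop (i-1)).countP P = (l'.drop (i-1)).length := by
          rw [List.countP_eq_length]
          intro a ha
          obtain ⟨j, hj, hja⟩ := List.getElem_of_mem ha
          rw [List.getElem_drop] at hja
          have hj' : i - 1 + j < l'.length := by
            have : (l'.drop (i-1)).length = l'.length - (i-1) := List.length_drop; omega
          have : l'[i-1] ≤ l'[i-1+j] := by
            rcases Nat.eq_zero_or_pos j with rfl | h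
            · exact le_rfl
            · exact hsorted ⟨i-1, hi'⟩ ⟨i-1+j, hj'⟩ (by simp; omega)
          rw [← hja]; simp only [hP, decide_eq_true_eq]; linarith
        have h2 : (l'.drop (i-1)).length = n - (i-1) := by
          rw [List.length_drop]; omega
        calc n - (i-1) = (l'.drop (i-1)).countP P := by rw [h1, h2]
          _ ≤ l'.countP P := by
              conv_rhs => rw [(List.take_append_drop (i-1) l').symm]
              rw [List.countP_append]; omega
      have step2 : l.countP P ≤ n - i := by
        rw [hl, List.countP_map]
        have hmono : ∀ k ∈ List.range n, (P ∘ fun k => y (k + 1)) k = true →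
            (fun k => decide (i ≤ k)) k = true := by
          intro k hk hPk
          simp only [Function.comp, hP, decide_eq_true_eq] at hPk
          simp only [decide_eq_true_eq]
          have hk' : k < n := List.mem_range.1 hk
          have hxk : y (k+1) ≤ x (k+1) + lam := by
            have := hmove (k+1) (by omega) (by omega)
            rw [abs_sub_le_iff] at this; linarith [this.2]
          by_contra hki
          push_neg at hki
          have : x (k + 1) ≤ x i := hsort (k+1) i (by omega) (by omega) (by omega)
          linarith
        calc (List.range n).countP (P ∘ fun k => y (k + 1))
            ≤ (List.range n).countP (fun k => decide (i ≤ k)) :=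
              List.countP_mono_left hmono
          _ = n - i := countP_range_le _ _
      have := hperm.countP_eq P
      omega

lemma exists_block (n : ℕ) (L r : ℝ) (hL : 0 < L) (hr : 0 < r) (y : ℕ → ℝ)
    (hmono : ∀ p q, 1 ≤ p → p ≤ q → q ≤ n → y p ≤ y q)
    (hcov : Covers n L r y) :
    ∃ i j, 1 ≤ i ∧ i ≤ j ∧ j ≤ n ∧ y i ≤ r ∧ L - r ≤ y j ∧
      ∀ k, i ≤ k → k < j → y (k + 1) ≤ y k + 2 * r := by
  obtain ⟨S, ⟨a, rfl⟩, hS⟩ := hcov (Set.mem_Icc.2 ⟨le_rfl, le_of_lt hL⟩)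
  simp only [Set.mem_iUnion, Set.mem_Icc] at hS
  obtain ⟨⟨ha1, ha2⟩, ha3, ha4⟩ := hS
  obtain ⟨T, ⟨b, rfl⟩, hT⟩ := hcov (Set.mem_Icc.2 ⟨le_of_lt hL, le_rfl⟩)
  simp only [Set.mem_iUnion, Set.mem_Icc] at hT
  obtain ⟨⟨hb1, hb2⟩, hb3, hb4⟩ := hT
  -- y a ∈ [-r, r], y b ∈ [L - r, L + r]
  have hya1 : -r ≤ y a := by linarith
  have hya2 : y a ≤ r := by linarith
  have hyb1 : L - r ≤ y b := by linarith
  have hyb2 : y b ≤ L + r := by linarith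
  rcases le_or_gt a b with hab | hba
  · refine ⟨a, b, ha1, hab, hb2, hya2, hyb1, ?_⟩
    intro k hik hkj
    by_contra hgap
    push_neg at hgap
    set t := (y k + y (k + 1)) / 2 with htdef
    have hyk : y a ≤ y k := hmono a k ha1 hik (by omega)
    have hyk1 : y (k + 1) ≤ y b := hmono (k + 1) b (by omega) (by omega) hb2
    have ht0 : 0 ≤ t := by rw [htdef]; linarith
    have htL : t ≤ L := by rw [htdef]; linarith
    obtain ⟨U, ⟨m, rfl⟩, hU⟩ := hcov (Set.mem_Icc.2 ⟨ht0, htL⟩)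
    simp only [Set.mem_iUnion, Set.mem_Icc] at hU
    obtain ⟨⟨hm1, hm2⟩, hm3, hm4⟩ := hU
    rcases le_or_gt m k with hmk | hmk
    · have : y m ≤ y k := hmono m k hm1 hmk (by omega)
      rw [htdef] at hm3; linarith
    · have : y (k + 1) ≤ y m := hmono (k + 1) m (by omega) hmk hm2
      rw [htdef] at hm4; linarith
  · exact ⟨b, b, hb1, le_rfl, hb2, le_trans (hmono b a hb1 (le_of_lt hba) ha2) hya2,
      hyb1, fun k h1 h2 => by omega⟩

lemma chain_accum (r : ℝ) (y : ℕ → ℝ) (i j : ℕ)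
    (hchain : ∀ k, i ≤ k → k < j → y (k + 1) ≤ y k + 2 * r) :
    ∀ p q, i ≤ p → p ≤ q → q ≤ j → y q ≤ y p + 2 * r * ((q : ℝ) - (p : ℝ)) := by
  intro p q hip hpq hqj
  obtain ⟨d, rfl⟩ := Nat.exists_eq_add_of_le hpq
  induction d with
  | zero => simp
  | succ d ih =>
    have h1 : y (p + d + 1) ≤ y (p + d) + 2 * r := hchain (p + d) (by omega) (by omega)
    have h2 := ih (by omega) (by omega)
    have : ((p + (d+1) : ℕ) : ℝ) = ((p + d : ℕ) : ℝ) + 1 := by push_cast; ring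
    rw [show p + (d+1) = (p + d) + 1 from rfl]
    push_cast
    push_cast at h2
    linarith

/-- combined family value at pair (p,q) relative to block (i,j) -/
noncomputable def fam (L r : ℝ) (x : ℕ → ℝ) (i j : ℕ) (pq : ℕ × ℕ) : ℝ :=
  max (max (x pq.2 - (2 * r * ((pq.2 : ℝ) - (i : ℝ)) + r))
           (L - 2 * r * ((j : ℝ) - (pq.1 : ℝ)) - r - x pq.1))
      ((x pq.2 - x pq.1 - 2 * r * ((pq.2 : ℝ) - (pq.1 : ℝ))) / 2)

noncomputable def MijSet (L r : ℝ) (x : ℕ → ℝ) (i j : ℕ) : Finset ℝ :=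
  insert 0 (((Finset.Icc i j ×ˢ Finset.Icc i j).filter (fun pq => pq.1 ≤ pq.2)).image
    (fam L r x i j))

noncomputable def Mij (L r : ℝ) (x : ℕ → ℝ) (i j : ℕ) : ℝ :=
  (MijSet L r x i j).max' (Finset.insert_nonempty _ _)

lemma Mij_nonneg (L r : ℝ) (x : ℕ → ℝ) (i j : ℕ) : 0 ≤ Mij L r x i j :=
  Finset.le_max' _ 0 (Finset.mem_insert_self _ _)

lemma fam_le_Mij (L r : ℝ) (x : ℕ → ℝ) (i j p q : ℕ) (hip : i ≤ p) (hpq : p ≤ q)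
    (hqj : q ≤ j) : fam L r x i j (p, q) ≤ Mij L r x i j := by
  apply Finset.le_max'
  apply Finset.mem_insert_of_mem
  exact Finset.mem_image_of_mem _ (Finset.mem_filter.2
    ⟨Finset.mem_product.2 ⟨Finset.mem_Icc.2 ⟨hip, hpq.trans hqj⟩,
      Finset.mem_Icc.2 ⟨hip.trans hpq, hqj⟩⟩, hpq⟩)

lemma Mij_le (L r : ℝ) (x : ℕ → ℝ) (i j : ℕ) (c : ℝ) (h0 : 0 ≤ c)
    (h : ∀ p q, i ≤ p → p ≤ q → q ≤ j → fam L r x i j (p, q) ≤ c) :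
    Mij L r x i j ≤ c := by
  apply Finset.max'_le
  intro a ha
  rcases Finset.mem_insert.1 ha with rfl | ha
  · exact h0
  · obtain ⟨pq, hpq, rfl⟩ := Finset.mem_image.1 ha
    obtain ⟨hprod, hle⟩ := Finset.mem_filter.1 hpq
    obtain ⟨h1, h2⟩ := Finset.mem_product.1 hprod
    rw [Finset.mem_Icc] at h1 h2
    exact h pq.1 pq.2 h1.1 hle h2.2

lemma exists_placement (n : ℕ) (L r : ℝ) (hr : 0 < r) (x : ℕ → ℝ) (i j : ℕ)
    (hi : 1 ≤ i) (hij : i ≤ j) (hj : j ≤ n) (lam : ℝ) (hlam0 : 0 ≤ lam)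
    (hcapij : L ≤ 2 * r * ((j : ℝ) - (i : ℝ) + 1))
    (hfam : ∀ p q, i ≤ p → p ≤ q → q ≤ j → fam L r x i j (p, q) ≤ lam) :
    ∃ y, Covers n L r y ∧ MaxMove n x y ≤ lam := by
  classical
  have hfam1 : ∀ q, i ≤ q → q ≤ j → x q - (2 * r * ((q : ℝ) - (i : ℝ)) + r) ≤ lam :=
    fun q h1 h2 => le_trans (le_trans (le_max_left _ _) (le_max_left _ _)) (hfam q q h1 le_rfl h2)
  have hfam2 : ∀ p, i ≤ p → p ≤ j → L - 2 * r * ((j : ℝ) - (p : ℝ)) - r - x p ≤ lam :=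
    fun p h1 h2 => le_trans (le_trans (le_max_right _ _) (le_max_left _ _)) (hfam p p h1 le_rfl h2)
  have hfam3 : ∀ p q, i ≤ p → p ≤ q → q ≤ j →
      (x q - x p - 2 * r * ((q : ℝ) - (p : ℝ))) / 2 ≤ lam :=
    fun p q h1 h2 h3 => le_trans (le_max_right _ _) (hfam p q h1 h2 h3)
  set g : ℕ → ℝ := fun k => (insert i (Finset.Icc i k)).inf' (Finset.insert_nonempty _ _)
    (fun p => x p + lam + 2 * r * ((k : ℝ) - (p : ℝ))) with hg
  set y : ℕ → ℝ := fun k => if i ≤ k ∧ k ≤ j then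
      min (r + 2 * r * ((k : ℝ) - (i : ℝ))) (g k) else x k with hy
  have hyblock : ∀ k, i ≤ k → k ≤ j →
      y k = min (r + 2 * r * ((k : ℝ) - (i : ℝ))) (g k) := by
    intro k h1 h2; rw [hy]; simp [h1, h2]
  have hmemins : ∀ k p, i ≤ p → p ≤ k → p ∈ insert i (Finset.Icc i k) :=
    fun k p h1 h2 => Finset.mem_insert_of_mem (Finset.mem_Icc.2 ⟨h1, h2⟩)
  have hmem_elim : ∀ k p, i ≤ k → p ∈ insert i (Finset.Icc i k) → i ≤ p ∧ p ≤ k := by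
    intro k p hik hp
    rcases Finset.mem_insert.1 hp with rfl | hp
    · exact ⟨le_rfl, hik⟩
    · exact Finset.mem_Icc.1 hp
  have hyub : ∀ k, i ≤ k → k ≤ j → y k ≤ x k + lam := by
    intro k h1 h2
    rw [hyblock k h1 h2]
    have := Finset.inf'_le (fun p => x p + lam + 2 * r * ((k : ℝ) - (p : ℝ)))
      (hmemins k k h1 le_rfl)
    calc min (r + 2 * r * ((k : ℝ) - (i : ℝ))) (g k) ≤ g k := min_le_right _ _
      _ ≤ x k + lam + 2 * r * ((k : ℝ) - (k : ℝ)) := this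
      _ = x k + lam := by ring
  have hylb : ∀ k, i ≤ k → k ≤ j → x k - lam ≤ y k := by
    intro k h1 h2
    rw [hyblock k h1 h2]
    apply le_min
    · have := hfam1 k h1 h2; linarith
    · apply Finset.le_inf'
      intro p hp
      obtain ⟨hp1, hp2⟩ := hmem_elim k p h1 hp
      have := hfam3 p k hp1 hp2 h2
      linarith
  have hyi : y i ≤ r := by
    rw [hyblock i le_rfl hij]
    calc min (r + 2 * r * ((i : ℝ) - (i : ℝ))) (g i) ≤ r + 2 * r * ((i : ℝ) - (i : ℝ)) :=
        min_le_left _ _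
      _ = r := by ring
  have hyj : L - r ≤ y j := by
    rw [hyblock j hij le_rfl]
    apply le_min
    · linarith
    · apply Finset.le_inf'
      intro p hp
      obtain ⟨hp1, hp2⟩ := hmem_elim j p hij hp
      have := hfam2 p hp1 hp2
      linarith
  have hchain : ∀ k, i ≤ k → k < j → y (k + 1) ≤ y k + 2 * r := by
    intro k h1 h2
    rw [hyblock k h1 (le_of_lt h2), hyblock (k + 1) (by omega) (by omega)]
    have hA : min (r + 2 * r * (((k : ℕ) + 1 : ℝ) - (i : ℝ))) (g (k + 1)) ≤
        (r + 2 * r * ((k : ℝ) - (i : ℝ))) + 2 * r := by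
      calc _ ≤ r + 2 * r * (((k : ℕ) + 1 : ℝ) - (i : ℝ)) := min_le_left _ _
        _ = (r + 2 * r * ((k : ℝ) - (i : ℝ))) + 2 * r := by ring
    have hB : min (r + 2 * r * (((k : ℕ) + 1 : ℝ) - (i : ℝ))) (g (k + 1)) ≤ g k + 2 * r := by
      obtain ⟨p, hp, hpeq⟩ := Finset.exists_mem_eq_inf'
        (Finset.insert_nonempty i (Finset.Icc i k))
        (fun p => x p + lam + 2 * r * ((k : ℝ) - (p : ℝ)))
      obtain ⟨hp1, hp2⟩ := hmem_elim k p h1 hp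
      have hp' : p ∈ insert i (Finset.Icc i (k + 1)) := hmemins (k + 1) p hp1 (by omega)
      have := Finset.inf'_le
        (fun q => x q + lam + 2 * r * (((k + 1 : ℕ) : ℝ) - (q : ℝ))) hp'
      calc min (r + 2 * r * (((k : ℕ) + 1 : ℝ) - (i : ℝ))) (g (k + 1)) ≤ g (k + 1) :=
          min_le_right _ _
        _ ≤ x p + lam + 2 * r * (((k + 1 : ℕ) : ℝ) - (p : ℝ)) := this
        _ = (x p + lam + 2 * r * ((k : ℝ) - (p : ℝ))) + 2 * r := by push_cast; ring
        _ = g k + 2 * r := by rw [hg]; rw [← hpeq]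
    have hmincast : ((k + 1 : ℕ) : ℝ) = ((k : ℕ) : ℝ) + 1 := by push_cast; ring
    rw [hmincast] at *
    rcases le_total (r + 2 * r * ((k : ℝ) - (i : ℝ))) (g k) with h | h
    · rw [min_eq_left h]; exact le_trans hA (by linarith)
    · rw [min_eq_right h]; exact hB
  refine ⟨y, ?_, ?_⟩
  · -- coverage
    intro t ht
    obtain ⟨ht0, htL⟩ := Set.mem_Icc.1 ht
    set S : Finset ℕ := (Finset.Icc i j).filter (fun k => y k - r ≤ t) with hS
    have hiS : i ∈ S := Finset.mem_filter.2 ⟨Finset.mem_Icc.2 ⟨le_rfl, hij⟩, by linarith⟩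
    obtain ⟨k, hkmax⟩ : ∃ k, S.max' ⟨i, hiS⟩ = k := ⟨_, rfl⟩
    have hkS : k ∈ S := hkmax ▸ Finset.max'_mem _ _
    obtain ⟨hkIcc, hkt⟩ := Finset.mem_filter.1 hkS
    obtain ⟨hik, hkj⟩ := Finset.mem_Icc.1 hkIcc
    have hcov2 : t ≤ y k + r := by
      rcases eq_or_lt_of_le hkj with rfl | hkj'
      · linarith
      · have hk1 : k + 1 ∉ S := by
          intro hmem
          have := Finset.le_max' S (k + 1) hmem
          rw [hkmax] at this
          omega
        have : ¬ (y (k + 1) - r ≤ t) := by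
          intro hc
          exact hk1 (Finset.mem_filter.2 ⟨Finset.mem_Icc.2 ⟨by omega, by omega⟩, hc⟩)
        push_neg at this
        have := hchain k hik hkj'
        linarith
    simp only [Set.mem_iUnion, Set.mem_Icc]
    exact ⟨k, ⟨by omega, by omega⟩, by linarith, hcov2⟩
  · -- max move
    apply maxMove_le n (by omega) x y lam
    intro k hk
    obtain ⟨hk1, hk2⟩ := Set.mem_Icc.1 hk
    by_cases hb : i ≤ k ∧ k ≤ j
    · rw [abs_sub_le_iff]
      constructor
      · have := hylb k hb.1 hb.2; linarith
      · have := hyub k hb.1 hb.2; linarith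
    · have : y k = x k := by rw [hy]; simp [hb]
      rw [this]
      simpa using hlam0

lemma cover_ge_Mij (n : ℕ) (hn : 1 ≤ n) (L r : ℝ) (hL : 0 < L) (hr : 0 < r)
    (x : ℕ → ℝ) (hsort : ∀ i j, 1 ≤ i → i ≤ j → j ≤ n → x i ≤ x j)
    (y : ℕ → ℝ) (hcov : Covers n L r y) :
    ∃ i j, 1 ≤ i ∧ i ≤ j ∧ j ≤ n ∧ L ≤ 2 * r * ((j : ℝ) - (i : ℝ) + 1) ∧
      Mij L r x i j ≤ MaxMove n x y := by
  obtain ⟨y', hcov', hmono', hmove'⟩ := exists_sorted n hn L r x y hsort hcov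
  set lam := MaxMove n x y with hlamdef
  have hmv : ∀ k, 1 ≤ k → k ≤ n → x k - lam ≤ y' k ∧ y' k ≤ x k + lam := by
    intro k h1 h2
    have := hmove' k ⟨h1, h2⟩
    rw [abs_sub_le_iff] at this
    constructor <;> linarith [this.1, this.2]
  obtain ⟨i, j, hi, hij, hj, hyi, hyj, hchain⟩ := exists_block n L r hL hr y' hmono' hcov'
  have haccum := chain_accum r y' i j hchain
  have hcast : ∀ p q : ℕ, p ≤ q → (0:ℝ) ≤ (q:ℝ) - (p:ℝ) := by
    intro p q h; have : (p:ℝ) ≤ q := by exact_mod_cast h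
    linarith
  refine ⟨i, j, hi, hij, hj, ?_, ?_⟩
  · have := haccum i j le_rfl hij le_rfl
    linarith
  · apply Mij_le
    · exact maxMove_nonneg n hn x y
    · intro p q hip hpq hqj
      have hq1 : 1 ≤ q := le_trans hi (hip.trans hpq)
      have hqn : q ≤ n := (hqj.trans hj)
      have hp1 : 1 ≤ p := le_trans hi hip
      have hpn : p ≤ n := le_trans (hpq.trans hqj) hj
      have h1 := (hmv q hq1 hqn).1
      have h2 := (hmv p hp1 hpn).2
      have hiq := haccum i q le_rfl (hip.trans hpq) hqj
      have hpj := haccum p j hip (hpq.trans hqj) le_rfl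
      have hpq' := haccum p q hip hpq hqj
      apply max_le (max_le ?_ ?_) ?_ <;> simp only [fam] <;> linarith

theorem stmt7 (n : ℕ) (hn : 1 ≤ n) (L r : ℝ) (hL : 0 < L) (hr : 0 < r)
    (x : ℕ → ℝ) (hsort : ∀ i j, 1 ≤ i → i ≤ j → j ≤ n → x i ≤ x j)
    (hcap : L ≤ 2 * n * r)
    (hlam : 0 < LamStar n L r x) :
    (∃ i j, 1 ≤ i ∧ i ≤ j ∧ j ≤ n ∧
        LamStar n L r x = x j - (2 * r * ((j : ℝ) - (i : ℝ)) + r)) ∨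
    (∃ i j, 1 ≤ i ∧ i ≤ j ∧ j ≤ n ∧
        LamStar n L r x = L - 2 * r * ((j : ℝ) - (i : ℝ)) - r - x i) ∨
    (∃ i j, 1 ≤ i ∧ i < j ∧ j ≤ n ∧
        LamStar n L r x = (x j - x i - 2 * r * ((j : ℝ) - (i : ℝ))) / 2) := by
  classical
  set B : Finset (ℕ × ℕ) := (Finset.Icc 1 n ×ˢ Finset.Icc 1 n).filter
    (fun ij => ij.1 ≤ ij.2 ∧ L ≤ 2 * r * ((ij.2 : ℝ) - (ij.1 : ℝ) + 1)) with hBdef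
  have hBmem : (1, n) ∈ B := by
    rw [hBdef]
    refine Finset.mem_filter.2 ⟨Finset.mem_product.2
      ⟨Finset.mem_Icc.2 ⟨le_rfl, hn⟩, Finset.mem_Icc.2 ⟨hn, le_rfl⟩⟩, hn, ?_⟩
    push_cast
    linarith
  set V : Finset ℝ := B.image (fun ij => Mij L r x ij.1 ij.2) with hVdef
  have hVne : V.Nonempty := ⟨_, Finset.mem_image_of_mem _ hBmem⟩
  set μ := V.min' hVne with hμdef
  obtain ⟨⟨i0, j0⟩, hij0B, hμval⟩ := Finset.mem_image.1 (Finset.min'_mem V hVne)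
  dsimp only at hμval
  have hμval' : μ = Mij L r x i0 j0 := by rw [hμdef, ← hμval]
  obtain ⟨hprod0, h0le, hcap0⟩ := Finset.mem_filter.1 hij0B
  dsimp only at h0le hcap0
  obtain ⟨hi0m, hj0m⟩ := Finset.mem_product.1 hprod0
  dsimp only at hi0m hj0m
  obtain ⟨hi01, hi0n⟩ := Finset.mem_Icc.1 hi0m
  obtain ⟨hj01, hj0n⟩ := Finset.mem_Icc.1 hj0m
  have hμ0 : 0 ≤ μ := hμval' ▸ Mij_nonneg L r x i0 j0
  obtain ⟨y0, hy0cov, hy0max⟩ := exists_placement n L r hr x i0 j0 hi01 h0le hj0n μ hμ0 hcap0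
    (fun p q h1 h2 h3 => hμval' ▸ fam_le_Mij L r x i0 j0 p q h1 h2 h3)
  have hlow : ∀ z ∈ MaxMove n x '' {y : ℕ → ℝ | Covers n L r y}, μ ≤ z := by
    rintro _ ⟨y, hy, rfl⟩
    obtain ⟨i, j, hi, hij, hj, hcapij, hMle⟩ := cover_ge_Mij n hn L r hL hr x hsort y hy
    have hijB : (i, j) ∈ B := by
      rw [hBdef]
      exact Finset.mem_filter.2 ⟨Finset.mem_product.2
        ⟨Finset.mem_Icc.2 ⟨hi, hij.trans hj⟩, Finset.mem_Icc.2 ⟨hi.trans hij, hj⟩⟩, hij, hcapij⟩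
    exact le_trans (Finset.min'_le V _ (Finset.mem_image_of_mem _ hijB)) hMle
  have hEq : LamStar n L r x = μ := by
    apply le_antisymm
    · exact le_trans (csInf_le ⟨μ, fun z hz => hlow z hz⟩ ⟨y0, hy0cov, rfl⟩) hy0max
    · exact le_csInf ⟨_, ⟨y0, hy0cov, rfl⟩⟩ hlow
  have hLM : LamStar n L r x = Mij L r x i0 j0 := by rw [hEq, hμval']
  have hmax := Finset.max'_mem (MijSet L r x i0 j0) (Finset.insert_nonempty _ _)
  rw [show (MijSet L r x i0 j0).max' _ = Mij L r x i0 j0 from rfl] at hmax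
  rcases Finset.mem_insert.1 hmax with h0 | himg
  · rw [hLM, h0] at hlam; exact absurd hlam (lt_irrefl 0)
  · obtain ⟨⟨p, q⟩, hpqmem, hfameq⟩ := Finset.mem_image.1 himg
    obtain ⟨hprod, hple⟩ := Finset.mem_filter.1 hpqmem
    dsimp only at hple
    obtain ⟨hpm, hqm⟩ := Finset.mem_product.1 hprod
    obtain ⟨hp1, hp2⟩ := Finset.mem_Icc.1 hpm
    obtain ⟨hq1, hq2⟩ := Finset.mem_Icc.1 hqm
    have hLfam : LamStar n L r x = fam L r x i0 j0 (p, q) := by rw [hLM, ← hfameq]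
    rcases max_choice (max (x q - (2 * r * ((q : ℝ) - (i0 : ℝ)) + r))
        (L - 2 * r * ((j0 : ℝ) - (p : ℝ)) - r - x p))
        ((x q - x p - 2 * r * ((q : ℝ) - (p : ℝ))) / 2) with hc | hc
    · rw [fam, hc] at hLfam
      rcases max_choice (x q - (2 * r * ((q : ℝ) - (i0 : ℝ)) + r))
          (L - 2 * r * ((j0 : ℝ) - (p : ℝ)) - r - x p) with hc2 | hc2
      · rw [hc2] at hLfam
        exact Or.inl ⟨i0, q, hi01, hq1, hq2.trans hj0n, hLfam⟩
      · rw [hc2] at hLfam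
        exact Or.inr (Or.inl ⟨p, j0, le_trans hi01 hp1, hp2, hj0n, hLfam⟩)
    · rw [fam, hc] at hLfam
      rcases eq_or_lt_of_le hple with rfl | hplt
      · exfalso
        have : (x p - x p - 2 * r * ((p : ℝ) - (p : ℝ))) / 2 = 0 := by ring
        rw [this] at hLfam
        rw [hLfam] at hlam
        exact absurd hlam (lt_irrefl 0)
      · exact Or.inr (Or.inr ⟨p, q, le_trans hi01 hp1, hplt, hq2.trans hj0n, hLfam⟩)
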